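/- arXiv:2203.07582 — 6 statements merged into one kernel-verified Lean document; each statement's English description precedes it below -/
import Mathlib

section
/- Let R be a ring with identity, p ∈ R an idempotent, and x ∈ R with px(1-p) = 0. Set a = pxp, c = (1-p)xp, d = (1-p)x(1-p). If a and d have group inverses in the corner rings pRp and (1-p)R(1-p) respectively, and (1-dd^#)c(1-aa^#) = 0, then x has group inverse x^# = a^# + u + d^#, where u = (1-dd^#)c(a^#)^2 + (d^#)^2 c(1-aa^#) - d^# c a^#. -/
/-- `x` is a group inverse of `a`. -/
def IsGroupInv {R : Type*} [Ring R] (a x : R) : Prop :=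
  x * a * x = x ∧ a * x = x * a ∧ a * x * a = a

lemma key {R : Type*} [Ring R] (a c d y z : R)
    (hy2 : y * a = a * y) (hy3 : a * y * a = a) (hyy : a * (y * y) = y)
    (hz2 : z * d = d * z) (hz3 : d * z * d = d) (hzz : d * (z * z) = z)
    (hac : a * c = 0) (had : a * d = 0) (haz : a * z = 0)
    (hyc : y * c = 0) (hyd : y * d = 0) (hyz : y * z = 0)
    (hda : d * a = 0) (hdy : d * y = 0) (hza : z * a = 0) (hzy : z * y = 0)
    (hcc : c * c = 0) (hcd : c * d = 0) (hcz : c * z = 0)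
    (h0 : (1 - d * z) * c * (1 - a * y) = 0) :
    IsGroupInv (a + c + d)
      (y + ((1 - d * z) * c * (y * y) + (z * z) * c * (1 - a * y) - z * c * y) + z) := by
  -- trailing-variable versions of the rules
  have T : ∀ {u v : R}, u * v = 0 → ∀ t, u * (v * t) = 0 := fun h t => by
    rw [← mul_assoc, h, zero_mul]
  have Hac := T hac; have Had := T had; have Haz := T haz
  have Hyc := T hyc; have Hyd := T hyd; have Hyz := T hyz
  have Hda := T hda; have Hdy := T hdy; have Hza := T hza; have Hzy := T hzy
  have Hcc := T hcc; have Hcd := T hcd; have Hcz := T hcz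
  have Hy2 : ∀ t, y * (a * t) = a * (y * t) := fun t => by
    rw [← mul_assoc, hy2, mul_assoc]
  have Hz2 : ∀ t, z * (d * t) = d * (z * t) := fun t => by
    rw [← mul_assoc, hz2, mul_assoc]
  have Hyy : ∀ t, a * (y * (y * t)) = y * t := fun t => by
    rw [← mul_assoc, ← mul_assoc, mul_assoc a y y, hyy]
  have Hzz : ∀ t, d * (z * (z * t)) = z * t := fun t => by
    rw [← mul_assoc, ← mul_assoc, mul_assoc d z z, hzz]
  have haay : a * (a * y) = a := by rw [← hy2, ← mul_assoc, hy3]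
  have Haay : ∀ t, a * (a * (y * t)) = a * t := fun t => by
    rw [← mul_assoc, ← mul_assoc, mul_assoc a a y, haay]
  have hddz : d * (d * z) = d := by rw [← hz2, ← mul_assoc, hz3]
  have Hddz : ∀ t, d * (d * (z * t)) = d * t := fun t => by
    rw [← mul_assoc, ← mul_assoc, mul_assoc d d z, hddz]
  refine ⟨?_, ?_, ?_⟩
  · simp only [mul_add, add_mul, mul_sub, sub_mul, one_mul, mul_one, mul_assoc,
      Hac, Had, Haz, Hyc, Hyd, Hyz, Hda, Hdy, Hza, Hzy, Hcc, Hcd, Hcz,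
      hac, had, haz, hyc, hyd, hyz, hda, hdy, hza, hzy, hcc, hcd, hcz,
      hy2, hz2, Hy2, Hz2, Hyy, Hzz, hyy, hzz, Haay, haay, Hddz, hddz,
      mul_zero, zero_mul, add_zero, zero_add, sub_zero, zero_sub, neg_zero, sub_self]
    abel
  · simp only [mul_add, add_mul, mul_sub, sub_mul, one_mul, mul_one, mul_assoc,
      Hac, Had, Haz, Hyc, Hyd, Hyz, Hda, Hdy, Hza, Hzy, Hcc, Hcd, Hcz,
      hac, had, haz, hyc, hyd, hyz, hda, hdy, hza, hzy, hcc, hcd, hcz,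
      hy2, hz2, Hy2, Hz2, Hyy, Hzz, hyy, hzz, Haay, haay, Hddz, hddz,
      mul_zero, zero_mul, add_zero, zero_add, sub_zero, zero_sub, neg_zero, sub_self]
    abel
  · simp only [mul_add, add_mul, mul_sub, sub_mul, one_mul, mul_one, mul_assoc,
      Hac, Had, Haz, Hyc, Hyd, Hyz, Hda, Hdy, Hza, Hzy, Hcc, Hcd, Hcz,
      hac, had, haz, hyc, hyd, hyz, hda, hdy, hza, hzy, hcc, hcd, hcz,
      hy2, hz2, Hy2, Hz2, Hyy, Hzz, hyy, hzz, Haay, haay, Hddz, hddz,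
      mul_zero, zero_mul, add_zero, zero_add, sub_zero, zero_sub, neg_zero, sub_self]
    have h0' : c * (a * y) + -(d * (z * (c * (a * y)))) + d * (z * c) = c := by
      rw [← sub_eq_zero,
        show c * (a * y) + -(d * (z * (c * (a * y)))) + d * (z * c) - c
          = -((1 - d * z) * c * (1 - a * y)) from by noncomm_ring, h0, neg_zero]
    rw [show a + c * (a * y) + -(d * (z * (c * (a * y)))) + d * (z * c) + d
        = a + (c * (a * y) + -(d * (z * (c * (a * y)))) + d * (z * c)) + d from by abel, h0']

theorem stmt_1 {R : Type*} [Ring R] (p x y z : R)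
    (hp : p * p = p)
    (htriangular : p * x * (1 - p) = 0)
    (hy_corner : y = p * y * p)
    (hy : IsGroupInv (p * x * p) y)
    (hz_corner : z = (1 - p) * z * (1 - p))
    (hz : IsGroupInv ((1 - p) * x * (1 - p)) z)
    (hzero : (1 - ((1 - p) * x * (1 - p)) * z) * ((1 - p) * x * p) * (1 - (p * x * p) * y) = 0) :
    IsGroupInv x
      (y +
        ((1 - ((1 - p) * x * (1 - p)) * z) * ((1 - p) * x * p) * (y * y)
          + (z * z) * ((1 - p) * x * p) * (1 - (p * x * p) * y)
          - z * ((1 - p) * x * p) * y)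
        + z) := by
  have Hp : ∀ t : R, p * (p * t) = p * t := fun t => by rw [← mul_assoc, hp]
  have hyy : (p * x * p) * (y * y) = y := by rw [← mul_assoc, hy.2.1, hy.1]
  have hzz : ((1 - p) * x * (1 - p)) * (z * z) = z := by rw [← mul_assoc, hz.2.1, hz.1]
  have K := key (p * x * p) ((1 - p) * x * p) ((1 - p) * x * (1 - p)) y z
    hy.2.1.symm hy.2.2 hyy hz.2.1.symm hz.2.2 hzz
    (by simp only [mul_sub, sub_mul, mul_one, one_mul, mul_assoc, hp, Hp, sub_self,
      mul_zero, zero_mul, sub_zero, zero_sub, neg_zero])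
    (by simp only [mul_sub, sub_mul, mul_one, one_mul, mul_assoc, hp, Hp, sub_self,
      mul_zero, zero_mul, sub_zero, zero_sub, neg_zero])
    (by rw [hz_corner]; simp only [mul_sub, sub_mul, mul_one, one_mul, mul_assoc, hp, Hp, sub_self,
      mul_zero, zero_mul, sub_zero, zero_sub, neg_zero])
    (by rw [hy_corner]; simp only [mul_sub, sub_mul, mul_one, one_mul, mul_assoc, hp, Hp, sub_self,
      mul_zero, zero_mul, sub_zero, zero_sub, neg_zero])
    (by rw [hy_corner]; simp only [mul_sub, sub_mul, mul_one, one_mul, mul_assoc, hp, Hp, sub_self,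
      mul_zero, zero_mul, sub_zero, zero_sub, neg_zero])
    (by rw [hy_corner, hz_corner]; simp only [mul_sub, sub_mul, mul_one, one_mul, mul_assoc, hp, Hp, sub_self,
      mul_zero, zero_mul, sub_zero, zero_sub, neg_zero])
    (by simp only [mul_sub, sub_mul, mul_one, one_mul, mul_assoc, hp, Hp, sub_self,
      mul_zero, zero_mul, sub_zero, zero_sub, neg_zero])
    (by rw [hy_corner]; simp only [mul_sub, sub_mul, mul_one, one_mul, mul_assoc, hp, Hp, sub_self,
      mul_zero, zero_mul, sub_zero, zero_sub, neg_zero])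
    (by rw [hz_corner]; simp only [mul_sub, sub_mul, mul_one, one_mul, mul_assoc, hp, Hp, sub_self,
      mul_zero, zero_mul, sub_zero, zero_sub, neg_zero])
    (by rw [hy_corner, hz_corner]; simp only [mul_sub, sub_mul, mul_one, one_mul, mul_assoc, hp, Hp, sub_self,
      mul_zero, zero_mul, sub_zero, zero_sub, neg_zero])
    (by simp only [mul_sub, sub_mul, mul_one, one_mul, mul_assoc, hp, Hp, sub_self,
      mul_zero, zero_mul, sub_zero, zero_sub, neg_zero])
    (by simp only [mul_sub, sub_mul, mul_one, one_mul, mul_assoc, hp, Hp, sub_self,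
      mul_zero, zero_mul, sub_zero, zero_sub, neg_zero])
    (by rw [hz_corner]; simp only [mul_sub, sub_mul, mul_one, one_mul, mul_assoc, hp, Hp, sub_self,
      mul_zero, zero_mul, sub_zero, zero_sub, neg_zero])
    hzero
  have hx : p * x * p + (1 - p) * x * p + (1 - p) * x * (1 - p) = x := by
    rw [← sub_eq_zero,
      show p * x * p + (1 - p) * x * p + (1 - p) * x * (1 - p) - x = -(p * x * (1 - p)) from by
        noncomm_ring, htriangular, neg_zero]
  rwa [hx] at K
end

section
/- Let R be a ring with identity, b ∈ R with group inverse b^#, and p ∈ R an idempotent such that pb(1-p) = 0. If b(1-p) has a group inverse, then (b(1-p))^# = b^#(1-p) and pb has group inverse (pb)^# = pb^#. -/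
theorem stmt_2 {R : Type*} [Ring R] (b bs p : R)
    (hb : IsGroupInv b bs)
    (hp : p * p = p)
    (htriangular : p * b * (1 - p) = 0)
    (hgi : ∃ w, IsGroupInv (b * (1 - p)) w) :
    IsGroupInv (b * (1 - p)) (bs * (1 - p)) ∧ IsGroupInv (p * b) (p * bs) := by
  obtain ⟨w, hw1, hw2, hw3⟩ := hgi
  obtain ⟨h1, h2, h3⟩ := hb
  set q := 1 - p with hqdef
  have hpa : p * (b * q) = 0 := by rw [← mul_assoc]; exact htriangular
  have hqa : q * (b * q) = b * q := by
    calc q * (b * q) = 1 * (b * q) - p * (b * q) := by rw [hqdef, sub_mul]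
      _ = b * q := by rw [hpa, one_mul, sub_zero]
  -- a² = b * a  where a = b * q
  have ha2 : (b * q) * (b * q) = b * (b * q) := by rw [mul_assoc b q, hqa]
  -- a * w² = w
  have haw2 : (b * q) * (w * w) = w := by
    calc (b * q) * (w * w) = ((b * q) * w) * w := by simp only [mul_assoc]
      _ = (w * (b * q)) * w := by rw [hw2]
      _ = w := hw1
  have hqw : q * w = w := by
    calc q * w = q * ((b * q) * (w * w)) := by rw [haw2]
      _ = (q * (b * q)) * (w * w) := by simp only [mul_assoc]
      _ = w := by rw [hqa, haw2]
  have hpw : p * w = 0 := by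
    calc p * w = p * ((b * q) * (w * w)) := by rw [haw2]
      _ = (p * (b * q)) * (w * w) := by simp only [mul_assoc]
      _ = 0 := by rw [hpa, zero_mul]
  -- b * bs * (b * q) = b * q
  have hba : b * bs * (b * q) = b * q := by rw [← mul_assoc, h3]
  -- a * a * w = a
  have haaw : b * (b * q) * w = b * q := by
    calc b * (b * q) * w = (b * q) * (b * q) * w := by rw [ha2]
      _ = (b * q) * ((b * q) * w) := by rw [mul_assoc]
      _ = (b * q) * (w * (b * q)) := by rw [hw2]
      _ = (b * q) * w * (b * q) := by simp only [mul_assoc]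
      _ = b * q := hw3
  have e0 : bs * bs * b = bs := by
    calc bs * bs * b = bs * (bs * b) := by rw [mul_assoc]
      _ = bs * (b * bs) := by rw [h2]
      _ = bs * b * bs := by rw [mul_assoc]
      _ = bs := h1
  have e1 : bs * q = bs * bs * (b * q) := by
    calc bs * q = (bs * b * bs) * q := by rw [h1]
      _ = (bs * (b * bs)) * q := by rw [mul_assoc bs b bs]
      _ = (bs * (bs * b)) * q := by rw [h2]
      _ = bs * bs * (b * q) := by simp only [mul_assoc]
  -- the key identity : bs * q = w
  have key : bs * q = w := by
    calc bs * q = bs * bs * (b * q) := e1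
      _ = bs * bs * (b * (b * q) * w) := by rw [haaw]
      _ = (bs * bs * b) * b * q * w := by simp only [mul_assoc]
      _ = bs * b * q * w := by rw [e0]
      _ = b * bs * q * w := by rw [h2]
      _ = b * bs * (q * w) := by simp only [mul_assoc]
      _ = b * bs * w := by rw [hqw]
      _ = b * bs * ((b * q) * (w * w)) := by rw [haw2]
      _ = (b * bs * (b * q)) * (w * w) := by simp only [mul_assoc]
      _ = (b * q) * (w * w) := by rw [hba]
      _ = w := haw2
  -- helper : x*q = 0 → x*p = x
  have corner : ∀ x : R, x * q = 0 → x * p = x := by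
    intro x hx
    rw [hqdef, mul_sub, mul_one] at hx
    exact (sub_eq_zero.mp hx).symm
  have h1q : (1 : R) - q = p := by rw [hqdef, sub_sub_cancel]
  have hbp : b * p = b - b * q := by
    rw [← h1q, mul_sub, mul_one]
  have hpbsq0 : p * bs * q = 0 := by rw [mul_assoc, key, hpw]
  have hbsp : bs * p = bs - w := by
    rw [← h1q, mul_sub, mul_one, key]
  have hpbsp : p * bs * p = p * bs := corner (p * bs) hpbsq0
  have hL1 : (p * b) * (p * bs) = p * (b * bs) := by
    calc (p * b) * (p * bs) = p * ((b * p) * bs) := by simp only [mul_assoc]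
      _ = p * ((b - b * q) * bs) := by rw [hbp]
      _ = p * (b * bs - (b * q) * bs) := by rw [sub_mul]
      _ = p * (b * bs) - p * ((b * q) * bs) := by rw [mul_sub]
      _ = p * (b * bs) - (p * (b * q)) * bs := by simp only [mul_assoc]
      _ = p * (b * bs) := by rw [hpa, zero_mul, sub_zero]
  have hL2 : (p * bs) * (p * b) = p * (bs * b) := by
    calc (p * bs) * (p * b) = p * ((bs * p) * b) := by simp only [mul_assoc]
      _ = p * ((bs - w) * b) := by rw [hbsp]
      _ = p * (bs * b) - p * (w * b) := by rw [sub_mul, mul_sub]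
      _ = p * (bs * b) - (p * w) * b := by simp only [mul_assoc]
      _ = p * (bs * b) := by rw [hpw, zero_mul, sub_zero]
  have hL3 : (p * (b * bs)) * q = 0 := by
    calc (p * (b * bs)) * q = (p * (bs * b)) * q := by rw [h2]
      _ = (p * bs) * (b * q) := by simp only [mul_assoc]
      _ = (p * bs * p) * (b * q) := by rw [hpbsp]
      _ = (p * bs) * (p * (b * q)) := by simp only [mul_assoc]
      _ = 0 := by rw [hpa, mul_zero]
  have hL3p : (p * (b * bs)) * p = p * (b * bs) := corner _ hL3
  have hL3p' : (p * (bs * b)) * p = p * (bs * b) := by rw [← h2]; exact hL3p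
  constructor
  · rw [key]
    exact ⟨hw1, hw2, hw3⟩
  · refine ⟨?_, ?_, ?_⟩
    · calc (p * bs) * (p * b) * (p * bs) = (p * (bs * b)) * (p * bs) := by rw [hL2]
        _ = ((p * (bs * b)) * p) * bs := by simp only [mul_assoc]
        _ = (p * (bs * b)) * bs := by rw [hL3p']
        _ = p * (bs * b * bs) := by simp only [mul_assoc]
        _ = p * bs := by rw [h1]
    · rw [hL1, hL2, h2]
    · calc (p * b) * (p * bs) * (p * b) = (p * (b * bs)) * (p * b) := by rw [hL1]
        _ = ((p * (b * bs)) * p) * b := by simp only [mul_assoc]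
        _ = (p * (b * bs)) * b := by rw [hL3p]
        _ = p * (b * bs * b) := by simp only [mul_assoc]
        _ = p * b := by rw [h3]
end

section
/- Let R be a ring with identity and a, b ∈ R such that a, b, and abb^# all have group inverses and abb^# = baa^#. Then a + b has a group inverse if and only if 2abb^# has a group inverse. -/
private theorem lemA {R : Type*} [Ring R] (t x y : R) (h1 : t = t*t*x) (h2 : t = y*(t*t)) :
    IsGroupInv t (y*(t*x)) := by
  have key : t*x = y*t := by linear_combination (norm := noncomm_ring) h2*x - y*h1
  have haxa : t*x*t = t := by linear_combination (norm := noncomm_ring) key*t - h2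
  have htyt : t*(y*t) = t := by linear_combination (norm := noncomm_ring) -t*key - h1
  refine ⟨?_, ?_, ?_⟩
  · linear_combination (norm := noncomm_ring) y*haxa*(y*(t*x)) + y*htyt*x
  · linear_combination (norm := noncomm_ring) htyt*x - y*haxa + key
  · linear_combination (norm := noncomm_ring) htyt*(x*t) + haxa

private theorem core {R : Type*} [Ring R] (a b as bs c d : R)
    (ha1 : as*a*as = as) (ha2 : a*as = as*a) (ha3 : a*as*a = a)
    (hb1 : bs*b*bs = bs) (hb2 : b*bs = bs*b) (hb3 : b*bs*b = b)
    (hd1 : d*c*d = d) (hd2 : c*d = d*c) (hd3 : c*d*c = c)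
    (hca0 : a*(b*bs) = c) (hcb0 : b*(a*as) = c) :
    (∃ w, IsGroupInv (a+b) w) ↔ (∃ w, IsGroupInv (2*c) w) := by
  obtain ⟨q, hqdef⟩ : ∃ t, t = b*bs := ⟨_, rfl⟩
  obtain ⟨p, hpdef⟩ : ∃ t, t = a*as := ⟨_, rfl⟩
  obtain ⟨e, hedef⟩ : ∃ t, t = c*d := ⟨_, rfl⟩
  obtain ⟨f, hfdef⟩ : ∃ t, t = 1 - e := ⟨_, rfl⟩
  obtain ⟨n, hndef⟩ : ∃ t, t = a + b - 2*c := ⟨_, rfl⟩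
  obtain ⟨u, hudef⟩ : ∃ t, t = f*as*f := ⟨_, rfl⟩
  obtain ⟨u2, hu2def⟩ : ∃ t, t = f*bs*f := ⟨_, rfl⟩
  obtain ⟨X1, hX1def⟩ : ∃ t, t = f*a := ⟨_, rfl⟩
  obtain ⟨X2, hX2def⟩ : ∃ t, t = f*b := ⟨_, rfl⟩
  obtain ⟨B, hBdef⟩ : ∃ t, t = X1 + X2 := ⟨_, rfl⟩
  obtain ⟨m, hmdef⟩ : ∃ t, t = u + u2 := ⟨_, rfl⟩
  obtain ⟨C, hCdef⟩ : ∃ t, t = e*n := ⟨_, rfl⟩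
  obtain ⟨z, hzdef⟩ : ∃ t, t = 2*c := ⟨_, rfl⟩
  have hca : a*q = c := by rw [hqdef]; exact hca0
  have hcb : b*p = c := by rw [hpdef]; exact hcb0
  have hq2 : (q * q) = q := by
    linear_combination (norm := noncomm_ring) ((((hqdef * q) + ((b * bs) * hqdef)) + (b * hb1)) - hqdef)
  have hp2 : (p * p) = p := by
    linear_combination (norm := noncomm_ring) ((((hpdef * p) + ((a * as) * hpdef)) + (a * ha1)) - hpdef)
  have hpa : (p * a) = a := by
    linear_combination (norm := noncomm_ring) ((hpdef * a) + ha3)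
  have hap : (a * p) = a := by
    linear_combination (norm := noncomm_ring) (((a * hpdef) + (a * ha2)) + ha3)
  have hqb : (q * b) = b := by
    linear_combination (norm := noncomm_ring) ((hqdef * b) + hb3)
  have hbq : (b * q) = b := by
    linear_combination (norm := noncomm_ring) (((b * hqdef) + (b * hb2)) + hb3)
  have hqbs : (q * bs) = bs := by
    linear_combination (norm := noncomm_ring) (((hqdef * bs) + (hb2 * bs)) + hb1)
  have hpas : (p * as) = as := by
    linear_combination (norm := noncomm_ring) (((hpdef * as) + (ha2 * as)) + ha1)
  have hcq : (c * q) = c := by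
    linear_combination (norm := noncomm_ring) ((((-hca) * q) + (a * hq2)) + hca)
  have hcp : (c * p) = c := by
    linear_combination (norm := noncomm_ring) ((((-hcb) * p) + (b * hp2)) + hcb)
  have hqc : (q * c) = c := by
    linear_combination (norm := noncomm_ring) ((((-q) * hcb) + (hqb * p)) + hcb)
  have hpc : (p * c) = c := by
    linear_combination (norm := noncomm_ring) ((((-p) * hca) + (hpa * q)) + hca)
  have he_c : (e * c) = c := by
    linear_combination (norm := noncomm_ring) ((hedef * c) + hd3)
  have hce : (c * e) = c := by
    linear_combination (norm := noncomm_ring) (((c * hedef) + (c * hd2)) + hd3)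
  have hde : (d * e) = d := by
    linear_combination (norm := noncomm_ring) ((d * hedef) + hd1)
  have hed : (e * d) = d := by
    linear_combination (norm := noncomm_ring) (((hedef * d) + (hd2 * d)) + hd1)
  have he2 : (e * e) = e := by
    linear_combination (norm := noncomm_ring) ((((hedef * e) + ((c * d) * hedef)) + (hd3 * d)) - hedef)
  have hpe : (p * e) = e := by
    linear_combination (norm := noncomm_ring) (((p * hedef) + (hpc * d)) - hedef)
  have hqe : (q * e) = e := by
    linear_combination (norm := noncomm_ring) (((q * hedef) + (hqc * d)) - hedef)
  have hep : (e * p) = e := by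
    linear_combination (norm := noncomm_ring) (((((hedef * p) + (hd2 * p)) + (d * hcp)) - hd2) - hedef)
  have heq : (e * q) = e := by
    linear_combination (norm := noncomm_ring) (((((hedef * q) + (hd2 * q)) + (d * hcq)) - hd2) - hedef)
  have hpd : (p * d) = d := by
    linear_combination (norm := noncomm_ring) ((((-p) * hed) + (hpe * d)) + hed)
  have hqd : (q * d) = d := by
    linear_combination (norm := noncomm_ring) ((((-q) * hed) + (hqe * d)) + hed)
  have had : (a * d) = e := by
    linear_combination (norm := noncomm_ring) ((((-a) * hqd) + (hca * d)) - hedef)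
  have hbd : (b * d) = e := by
    linear_combination (norm := noncomm_ring) ((((-b) * hpd) + (hcb * d)) - hedef)
  have hasa : (as * a) = p := by
    linear_combination (norm := noncomm_ring) ((-ha2) - hpdef)
  have hbsb : (bs * b) = q := by
    linear_combination (norm := noncomm_ring) ((-hb2) - hqdef)
  have hase : (as * e) = d := by
    linear_combination (norm := noncomm_ring) ((((-as) * had) + (hasa * d)) + hpd)
  have hbse : (bs * e) = d := by
    linear_combination (norm := noncomm_ring) ((((-bs) * hbd) + (hbsb * d)) + hqd)
  have hae : (a * e) = c := by
    linear_combination (norm := noncomm_ring) ((((-a) * hqe) + (hca * e)) + hce)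
  have hbe : (b * e) = c := by
    linear_combination (norm := noncomm_ring) ((((-b) * hpe) + (hcb * e)) + hce)
  have hcas : (c * as) = (b * as) := by
    linear_combination (norm := noncomm_ring) (((-hcb) * as) + (b * hpas))
  have hcbs : (c * bs) = (a * bs) := by
    linear_combination (norm := noncomm_ring) (((-hca) * bs) + (a * hqbs))
  have hcb2 : (c * b) = (a * b) := by
    linear_combination (norm := noncomm_ring) (((-hca) * b) + (a * hqb))
  have hca2 : (c * a) = (b * a) := by
    linear_combination (norm := noncomm_ring) (((-hcb) * a) + (b * hpa))
  have hfc : (f * c) = 0 := by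
    linear_combination (norm := noncomm_ring) ((hfdef * c) - he_c)
  have hcf : (c * f) = 0 := by
    linear_combination (norm := noncomm_ring) ((c * hfdef) - hce)
  have hfd : (f * d) = 0 := by
    linear_combination (norm := noncomm_ring) ((hfdef * d) - hed)
  have hdf : (d * f) = 0 := by
    linear_combination (norm := noncomm_ring) ((d * hfdef) - hde)
  have hef : (e * f) = 0 := by
    linear_combination (norm := noncomm_ring) ((e * hfdef) - he2)
  have hfe : (f * e) = 0 := by
    linear_combination (norm := noncomm_ring) ((hfdef * e) - he2)
  have hne : (n * e) = 0 := by
    linear_combination (norm := noncomm_ring) ((((hndef * e) + hae) + hbe) - (2 * hce))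
  have hnc : (n * c) = 0 := by
    linear_combination (norm := noncomm_ring) (((-n) * he_c) + (hne * c))
  have hnk : (n * ((p + q) - (2 * e))) = n := by
    linear_combination (norm := noncomm_ring) (((((((((((hndef * ((p + q) - (2 * e))) + hap) + hca) - (2 * hae)) + hcb) + hbq) - (2 * hbe)) - (2 * hcp)) - (2 * hcq)) + (4 * hce)) - hndef)
  have haf : (a * f) = (a - c) := by
    linear_combination (norm := noncomm_ring) ((a * hfdef) - hae)
  have hbf : (b * f) = (b - c) := by
    linear_combination (norm := noncomm_ring) ((b * hfdef) - hbe)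
  have hfp : (f * p) = (p - e) := by
    linear_combination (norm := noncomm_ring) ((hfdef * p) - hep)
  have hpf : (p * f) = (p - e) := by
    linear_combination (norm := noncomm_ring) ((p * hfdef) - hpe)
  have hfq : (f * q) = (q - e) := by
    linear_combination (norm := noncomm_ring) ((hfdef * q) - heq)
  have hqf : (q * f) = (q - e) := by
    linear_combination (norm := noncomm_ring) ((q * hfdef) - hqe)
  have hXu : (X1 * u) = (p - e) := by
    linear_combination (norm := noncomm_ring) ((((((((hX1def * u) + ((f * a) * hudef)) + ((f * haf) * (as * f))) - ((f * hpdef) * f)) - (hfc * (as * f))) + (hfp * f)) + hpf) - hef)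
  have hX2u : (X2 * u2) = (q - e) := by
    linear_combination (norm := noncomm_ring) ((((((((hX2def * u2) + ((f * b) * hu2def)) + ((f * hbf) * (bs * f))) - ((f * hqdef) * f)) - (hfc * (bs * f))) + (hfq * f)) + hqf) - hef)
  have hff : (f * f) = f := by
    linear_combination (norm := noncomm_ring) ((f * hfdef) - hfe)
  have hasf : (as * f) = (as - d) := by
    linear_combination (norm := noncomm_ring) ((as * hfdef) - hase)
  have hbsf : (bs * f) = (bs - d) := by
    linear_combination (norm := noncomm_ring) ((bs * hfdef) - hbse)
  have huX : (u * X1) = (p - e) := by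
    linear_combination (norm := noncomm_ring) (((((((hudef * X1) + (((f * as) * f) * hX1def)) + (((f * as) * hff) * a)) + ((f * hasf) * a)) + (f * hasa)) + hfp) - (hfd * a))
  have hu2X : (u2 * X2) = (q - e) := by
    linear_combination (norm := noncomm_ring) (((((((hu2def * X2) + (((f * bs) * f) * hX2def)) + (((f * bs) * hff) * b)) + ((f * hbsf) * b)) + (f * hbsb)) + hfq) - (hfd * b))
  have hXuX : ((X1 * u) * X1) = X1 := by
    linear_combination (norm := noncomm_ring) (((((((hXu * X1) + ((p - e) * hX1def)) + (hpf * a)) + hpa) - (hef * a)) - hX1def) - (hfdef * a))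
  have hX2uX2 : ((X2 * u2) * X2) = X2 := by
    linear_combination (norm := noncomm_ring) (((((((hX2u * X2) + ((q - e) * hX2def)) + (hqf * b)) + hqb) - (hef * b)) - hX2def) - (hfdef * b))
  have huXu : ((u * X1) * u) = u := by
    linear_combination (norm := noncomm_ring) (((((((huX * u) + ((p - e) * hudef)) + (hpf * (as * f))) + (hpas * f)) - (hef * (as * f))) - hudef) - (hfdef * (as * f)))
  have hu2Xu2 : ((u2 * X2) * u2) = u2 := by
    linear_combination (norm := noncomm_ring) (((((((hu2X * u2) + ((q - e) * hu2def)) + (hqf * (bs * f))) + (hqbs * f)) - (hef * (bs * f))) - hu2def) - (hfdef * (bs * f)))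
  have hX12 : (X1 * X2) = 0 := by
    linear_combination (norm := noncomm_ring) ((((hX1def * X2) + ((f * a) * hX2def)) + ((f * haf) * b)) - (f * hcb2))
  have hX21 : (X2 * X1) = 0 := by
    linear_combination (norm := noncomm_ring) ((((hX2def * X1) + ((f * b) * hX1def)) + ((f * hbf) * a)) - (f * hca2))
  have hX1u2 : (X1 * u2) = 0 := by
    linear_combination (norm := noncomm_ring) (((((-X1) * hu2Xu2) + ((X1 * hu2X) * u2)) - ((X1 * hX2u) * u2)) + (hX12 * (u2 * u2)))
  have hu2X1 : (u2 * X1) = 0 := by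
    linear_combination (norm := noncomm_ring) (((((-hu2Xu2) * X1) + ((u2 * hX2u) * X1)) - ((u2 * hu2X) * X1)) + ((u2 * u2) * hX21))
  have hX2u1 : (X2 * u) = 0 := by
    linear_combination (norm := noncomm_ring) (((((-X2) * huXu) + ((X2 * huX) * u)) - ((X2 * hXu) * u)) + (hX21 * (u * u)))
  have huX2 : (u * X2) = 0 := by
    linear_combination (norm := noncomm_ring) (((((-huXu) * X2) + ((u * hXu) * X2)) - ((u * huX) * X2)) + ((u * u) * hX12))
  have hBm : (B * m) = ((p + q) - (2 * e)) := by
    linear_combination (norm := noncomm_ring) ((((((hBdef * m) + ((X1 + X2) * hmdef)) + hXu) + hX2u) + hX1u2) + hX2u1)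
  have hmB : (m * B) = ((p + q) - (2 * e)) := by
    linear_combination (norm := noncomm_ring) ((((((hmdef * B) + ((u + u2) * hBdef)) + huX) + hu2X) + huX2) + hu2X1)
  have hBmB : ((B * m) * B) = B := by
    linear_combination (norm := noncomm_ring) ((((((((((((hBdef * (m * B)) + (((X1 + X2) * hmdef) * B)) + (((X1 + X2) * (u + u2)) * hBdef)) + hXuX) + hX2uX2) + (X1 * huX2)) + (hX1u2 * X1)) + (hX1u2 * X2)) + (hX2u1 * X1)) + (hX2u1 * X2)) + (X2 * hu2X1)) - hBdef)
  have hmBm : ((m * B) * m) = m := by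
    linear_combination (norm := noncomm_ring) ((((((((((((hmdef * (B * m)) + (((u + u2) * hBdef) * m)) + (((u + u2) * (X1 + X2)) * hmdef)) + huXu) + hu2Xu2) + (u * hX1u2)) + (huX2 * u)) + (huX2 * u2)) + (hu2X1 * u)) + (hu2X1 * u2)) + (u2 * hX2u1)) - hmdef)
  have hez : (e * z) = z := by
    linear_combination (norm := noncomm_ring) (((e * hzdef) + (2 * he_c)) - hzdef)
  have hze : (z * e) = z := by
    linear_combination (norm := noncomm_ring) (((hzdef * e) + (2 * hce)) - hzdef)
  have heC : (e * C) = C := by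
    linear_combination (norm := noncomm_ring) (((e * hCdef) + (he2 * n)) - hCdef)
  have hX1e : (X1 * e) = 0 := by
    linear_combination (norm := noncomm_ring) (((hX1def * e) + (f * hae)) + hfc)
  have hX2e : (X2 * e) = 0 := by
    linear_combination (norm := noncomm_ring) (((hX2def * e) + (f * hbe)) + hfc)
  have hBe : (B * e) = 0 := by
    linear_combination (norm := noncomm_ring) (((hBdef * e) + hX1e) + hX2e)
  have heX1 : (e * X1) = 0 := by
    linear_combination (norm := noncomm_ring) ((e * hX1def) + (hef * a))
  have heX2 : (e * X2) = 0 := by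
    linear_combination (norm := noncomm_ring) ((e * hX2def) + (hef * b))
  have heB : (e * B) = 0 := by
    linear_combination (norm := noncomm_ring) (((e * hBdef) + heX1) + heX2)
  have hcu : (c * u) = 0 := by
    linear_combination (norm := noncomm_ring) ((c * hudef) + (hcf * (as * f)))
  have hcu2 : (c * u2) = 0 := by
    linear_combination (norm := noncomm_ring) ((c * hu2def) + (hcf * (bs * f)))
  have hzm : (z * m) = 0 := by
    linear_combination (norm := noncomm_ring) ((((hzdef * m) + ((2 * c) * hmdef)) + (2 * hcu)) + (2 * hcu2))
  have hue : (u * e) = 0 := by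
    linear_combination (norm := noncomm_ring) ((hudef * e) + ((f * as) * hfe))
  have hu2e : (u2 * e) = 0 := by
    linear_combination (norm := noncomm_ring) ((hu2def * e) + ((f * bs) * hfe))
  have hme : (m * e) = 0 := by
    linear_combination (norm := noncomm_ring) (((hmdef * e) + hue) + hu2e)
  have hmc : (m * c) = 0 := by
    linear_combination (norm := noncomm_ring) (((-m) * he_c) + (hme * c))
  have hmz : (m * z) = 0 := by
    linear_combination (norm := noncomm_ring) ((m * hzdef) + (2 * hmc))
  have hmC : (m * C) = 0 := by
    linear_combination (norm := noncomm_ring) ((m * hCdef) + (hme * n))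
  have hcX1 : (c * X1) = 0 := by
    linear_combination (norm := noncomm_ring) ((c * hX1def) + (hcf * a))
  have hcX2 : (c * X2) = 0 := by
    linear_combination (norm := noncomm_ring) ((c * hX2def) + (hcf * b))
  have hzB : (z * B) = 0 := by
    linear_combination (norm := noncomm_ring) ((((hzdef * B) + ((2 * c) * hBdef)) + (2 * hcX1)) + (2 * hcX2))
  have hBc : (B * c) = 0 := by
    linear_combination (norm := noncomm_ring) (((-B) * he_c) + (hBe * c))
  have hBz : (B * z) = 0 := by
    linear_combination (norm := noncomm_ring) ((B * hzdef) + (2 * hBc))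
  have hCc : (C * c) = 0 := by
    linear_combination (norm := noncomm_ring) ((hCdef * c) + (e * hnc))
  have hCz : (C * z) = 0 := by
    linear_combination (norm := noncomm_ring) ((C * hzdef) + (2 * hCc))
  have hCe : (C * e) = 0 := by
    linear_combination (norm := noncomm_ring) ((hCdef * e) + (e * hne))
  have hCC : (C * C) = 0 := by
    linear_combination (norm := noncomm_ring) ((C * hCdef) + (hCe * n))
  have hBC : (B * C) = 0 := by
    linear_combination (norm := noncomm_ring) ((B * hCdef) + (hBe * n))
  have hBcomm : (B * m) = (m * B) := by
    linear_combination (norm := noncomm_ring) (hBm - hmB)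
  have W6 : (B * (B * m)) = B := by
    linear_combination (norm := noncomm_ring) ((B * hBcomm) + hBmB)
  have W9c : (m * (B * B)) = B := by
    linear_combination (norm := noncomm_ring) (((-hBcomm) * B) + hBmB)
  have W13 : ((m * m) * (B * B)) = (m * B) := by
    linear_combination (norm := noncomm_ring) ((((-m) * hBcomm) * B) + (hmBm * B))
  have hCk : (C * ((p + q) - (2 * e))) = C := by
    linear_combination (norm := noncomm_ring) (((hCdef * ((p + q) - (2 * e))) + (e * hnk)) - hCdef)
  have W12 : (C * (B * m)) = C := by
    linear_combination (norm := noncomm_ring) ((C * hBm) + hCk)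
  have W11 : (C * (m * B)) = C := by
    linear_combination (norm := noncomm_ring) ((C * hmB) + hCk)
  have hS : (a + b) = ((z + C) + B) := by
    linear_combination (norm := noncomm_ring) (((((((((-hzdef) - hCdef) - hBdef) - hX1def) - hX2def) - (e * hndef)) - (hfdef * a)) - (hfdef * b)) + (2 * he_c))
  have ha_c : (a * c) = (c * c) := by
    linear_combination (norm := noncomm_ring) (((-a) * he_c) + (hae * c))
  have hb_c : (b * c) = (c * c) := by
    linear_combination (norm := noncomm_ring) (((-b) * he_c) + (hbe * c))
  have hsz : ((a + b) * (2 * c)) = ((2 * c) * (2 * c)) := by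
    linear_combination (norm := noncomm_ring) ((2 * ha_c) + (2 * hb_c))
  have hse : ((a + b) * e) = (2 * c) := by
    linear_combination (norm := noncomm_ring) (hae + hbe)
  constructor
  · rintro ⟨g, hw1, hw2, hw3⟩
    have F1 : (2 * c) = (g * ((2 * c) * (2 * c))) := by
      linear_combination (norm := noncomm_ring) (((((-hse) - (hw3 * e)) + (hw2 * ((a + b) * e))) + ((g * (a + b)) * hse)) + (g * hsz))
    have Ha : (2 * e) = (4 * (g * c)) := by
      linear_combination (norm := noncomm_ring) ((((F1 * d) + (2 * hedef)) - (4 * ((g * c) * hedef))) + (4 * (g * hce)))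
    have Hb : (2 * e) = (4 * (c * (g * e))) := by
      linear_combination (norm := noncomm_ring) (((((c * Ha) * d) - (2 * (hce * d))) + (2 * hedef)) - (4 * ((c * g) * hedef)))
    have F2 : (2 * c) = (((2 * c) * (2 * c)) * (g * e)) := by
      linear_combination (norm := noncomm_ring) ((c * Hb) - (2 * hce))
    exact ⟨g*((2*c)*(g*e)), lemA (2*c) (g*e) g F2 F1⟩
  · rintro ⟨w, hv1, hv2, hv3⟩
    obtain ⟨vp, hvpdef⟩ : ∃ t, t = e*w*e := ⟨_, rfl⟩
    obtain ⟨x1, hx1def⟩ : ∃ t, t = vp + m - vp*C*m := ⟨_, rfl⟩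
    obtain ⟨y1, hy1def⟩ : ∃ t, t = vp + m + (e - z*vp)*C*(m*m) - vp*C*m := ⟨_, rfl⟩
    have hv2z : (z * w) = (w * z) := by
      linear_combination (norm := noncomm_ring) (((hzdef * w) - (w * hzdef)) + hv2)
    have hv3z : ((z * w) * z) = z := by
      linear_combination (norm := noncomm_ring) ((((hzdef * (w * z)) + (((2 * c) * w) * hzdef)) + hv3) - hzdef)
    have hv1z : ((w * z) * w) = w := by
      linear_combination (norm := noncomm_ring) (((w * hzdef) * w) + hv1)
    have hzvp : (z * vp) = (z * (w * e)) := by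
      linear_combination (norm := noncomm_ring) ((z * hvpdef) + (hze * (w * e)))
    have W1 : ((z * z) * vp) = z := by
      linear_combination (norm := noncomm_ring) ((((z * hzvp) + ((z * hv2z) * e)) + ((z * w) * hze)) + hv3z)
    have W8 : (vp * (z * z)) = z := by
      linear_combination (norm := noncomm_ring) (((((hvpdef * (z * z)) + (((e * w) * hez) * z)) - ((e * hv2z) * z)) + (hez * (w * z))) + hv3z)
    have hvp2 : (z * vp) = (vp * z) := by
      linear_combination (norm := noncomm_ring) (((((((hzvp + (hv2z * e)) + (w * hze)) - (hvpdef * z)) - ((e * w) * hez)) + (e * hv2z)) - (hez * w)) - hv2z)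
    have W3 : (C * vp) = 0 := by
      linear_combination (norm := noncomm_ring) (((hCdef * vp) + ((e * n) * hvpdef)) + ((e * hne) * (w * e)))
    have W4 : (B * vp) = 0 := by
      linear_combination (norm := noncomm_ring) ((B * hvpdef) + (hBe * (w * e)))
    have W4b : (vp * B) = 0 := by
      linear_combination (norm := noncomm_ring) ((hvpdef * B) + ((e * w) * heB))
    have E1 : (a + b) = (((a + b) * (a + b)) * x1) := by
      linear_combination (norm := noncomm_ring) (((((((((((((((((((((-hS) * ((a + b) * x1)) - ((((z + C) + B) * hS) * x1)) + hS) - ((((z + C) + B) * ((z + C) + B)) * hx1def)) - (hzB * ((vp + m) - ((vp * C) * m)))) - (hCz * ((vp + m) - ((vp * C) * m)))) - (hCC * ((vp + m) - ((vp * C) * m)))) - (hBC * ((vp + m) - ((vp * C) * m)))) - (hBz * ((vp + m) - ((vp * C) * m)))) - W1) - (z * hzm)) + (W1 * (C * m))) - (z * W3)) + ((z * W3) * (C * m))) - (C * W4)) - W12) + ((C * W4) * (C * m))) - (B * W4)) - W6) + ((B * W4) * (C * m)))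
    have E2 : (a + b) = (y1 * ((a + b) * (a + b))) := by
      linear_combination (norm := noncomm_ring) ((((((((((((((((((((((((((((((hS - ((y1 * hS) * (a + b))) - ((y1 * ((z + C) + B)) * hS)) - (hy1def * (((z + C) + B) * ((z + C) + B)))) - ((((vp + m) + (((e - (z * vp)) * C) * (m * m))) - ((vp * C) * m)) * hzB)) - ((((vp + m) + (((e - (z * vp)) * C) * (m * m))) - ((vp * C) * m)) * hCz)) - ((((vp + m) + (((e - (z * vp)) * C) * (m * m))) - ((vp * C) * m)) * hCC)) - ((((vp + m) + (((e - (z * vp)) * C) * (m * m))) - ((vp * C) * m)) * hBC)) - ((((vp + m) + (((e - (z * vp)) * C) * (m * m))) - ((vp * C) * m)) * hBz)) - W8) - (hmz * z)) - (hmz * C)) - W9c) - ((((e * C) * m) * hmz) * z)) - ((((e * C) * m) * hmz) * C)) - ((((e * C) * m) * hmC) * B)) - ((e * C) * W13)) - (e * W11)) - heC) + (((((z * vp) * C) * m) * hmz) * z)) + (((((z * vp) * C) * m) * hmz) * C)) + (((((z * vp) * C) * m) * hmC) * B)) + (((z * vp) * C) * W13)) + ((z * vp) * W11)) + (hvp2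 * C)) - (W4b * B)) - (hmC * B)) + (((vp * C) * hmz) * z)) + (((vp * C) * hmz) * C)) + (((vp * C) * hmC) * B)) + ((vp * C) * W9c))
    exact ⟨y1*((a+b)*x1), lemA (a+b) x1 y1 E1 E2⟩

theorem stmt_7 {R : Type*} [Ring R] (a b as bs : R)
    (ha : IsGroupInv a as)
    (hb : IsGroupInv b bs)
    (hab : ∃ w, IsGroupInv (a * (b * bs)) w)
    (h : a * (b * bs) = b * (a * as)) :
    (∃ w, IsGroupInv (a + b) w) ↔ (∃ w, IsGroupInv (2 * (a * (b * bs))) w) := by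
  obtain ⟨ha1, ha2, ha3⟩ := ha
  obtain ⟨hb1, hb2, hb3⟩ := hb
  obtain ⟨d, hd1, hd2, hd3⟩ := hab
  exact core a b as bs (a*(b*bs)) d ha1 ha2 ha3 hb1 hb2 hb3 hd1 hd2 hd3 rfl h.symm
end

section
/- Let R be a ring with identity and a, b ∈ R with group inverses. If a²b = aba and b²a = bab, then ab has a group inverse and (ab)^# = a^# b^#. -/
/-- double commutant: if `a*x = x*a` then `as*x = x*as`. -/
lemma gi_comm {R : Type*} [Ring R] {a as x : R}
    (h1 : as * a * as = as) (hc : a * as = as * a) (h3 : a * as * a = a)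
    (hx : a * x = x * a) : as * x = x * as := by
  have m1 : as * x * a = a * as * x := by
    rw [mul_assoc, ← hx, ← mul_assoc, ← hc]
  have ex_e : a * as * x = a * as * x * as * a := by
    calc a * as * x = as * x * a := m1.symm
      _ = as * x * (a * as * a) := by rw [h3]
      _ = as * x * a * as * a := by simp only [← mul_assoc]
      _ = a * as * x * as * a := by rw [m1]
  have exe : a * as * x = x * a * as := by
    calc a * as * x = a * as * x * as * a := ex_e
      _ = a * as * x * (as * a) := by simp only [← mul_assoc]
      _ = a * as * x * (a * as) := by rw [← hc]
      _ = a * as * (x * a) * as := by simp only [← mul_assoc]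
      _ = a * as * (a * x) * as := by rw [hx]
      _ = a * as * a * x * as := by simp only [← mul_assoc]
      _ = a * x * as := by rw [h3]
      _ = x * a * as := by rw [hx]
  have left : as * x = a * as * x * as := by
    calc as * x = as * a * as * x := by rw [h1]
      _ = as * (a * as * x) := by simp only [← mul_assoc]
      _ = as * (x * a * as) := by rw [exe]
      _ = as * x * a * as := by simp only [← mul_assoc]
      _ = a * as * x * as := by rw [m1]
  have right : x * as = a * as * x * as := by
    calc x * as = x * (as * a * as) := by rw [h1]
      _ = x * (a * as) * as := by rw [← hc]; simp only [← mul_assoc]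
      _ = x * a * as * as := by simp only [← mul_assoc]
      _ = a * as * x * as := by rw [← exe]
  rw [left, right]

theorem stmt_8 {R : Type*} [Ring R] (a b as bs : R)
    (ha : IsGroupInv a as)
    (hb : IsGroupInv b bs)
    (h1 : a ^ 2 * b = a * b * a)
    (h2 : b ^ 2 * a = b * a * b) :
    IsGroupInv (a * b) (as * bs) := by
  obtain ⟨ha1, hac, ha3⟩ := ha
  obtain ⟨hb1, hbc, hb3⟩ := hb
  have h1' : a * b * a = a * a * b := by rw [← h1, sq]
  have h2' : b * a * b = b * b * a := by rw [← h2, sq]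
  -- as commutes with a*b, bs commutes with b*a
  have cas : as * (a * b) = (a * b) * as :=
    gi_comm ha1 hac ha3 (by simp only [← mul_assoc]; exact h1'.symm)
  have cbs : bs * (b * a) = (b * a) * bs :=
    gi_comm hb1 hbc hb3 (by simp only [← mul_assoc]; exact h2'.symm)
  have cas2 : a * b * as = as * a * b := by rw [mul_assoc as a b]; exact cas.symm
  have cbs2 : b * a * bs = bs * b * a := by rw [mul_assoc bs b a]; exact cbs.symm
  -- small word facts
  have asasa : as * as * a = as := by rw [mul_assoc, ← hac, ← mul_assoc, ha1]
  have bsbsb : bs * bs * b = bs := by rw [mul_assoc, ← hbc, ← mul_assoc, hb1]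
  have asaa : as * a * a = a := by rw [← hac, ha3]
  have bsbb : bs * b * b = b := by rw [← hbc, hb3]
  have asbL : as * b = a * b * as * as := by
    calc as * b = as * as * a * b := by rw [asasa]
      _ = as * (as * a * b) := by simp only [mul_assoc]
      _ = as * (a * b * as) := by rw [← cas2]
      _ = as * a * b * as := by simp only [mul_assoc]
      _ = a * b * as * as := by rw [cas2]
  have bsaL : bs * a = b * a * bs * bs := by
    calc bs * a = bs * bs * b * a := by rw [bsbsb]
      _ = bs * (bs * b * a) := by simp only [mul_assoc]
      _ = bs * (b * a * bs) := by rw [← cbs2]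
      _ = bs * b * a * bs := by simp only [mul_assoc]
      _ = b * a * bs * bs := by rw [cbs2]
  have asba : as * b * a = a * b * as := by
    calc as * b * a = a * b * as * as * a := by rw [asbL]
      _ = a * b * (as * as * a) := by simp only [mul_assoc]
      _ = a * b * as := by rw [asasa]
  have bsab : bs * a * b = b * a * bs := by
    calc bs * a * b = b * a * bs * bs * b := by rw [bsaL]
      _ = b * a * (bs * bs * b) := by simp only [mul_assoc]
      _ = b * a * bs := by rw [bsbsb]
  have hbs3r : bs = b * (bs * bs) := by
    calc bs = bs * b * bs := hb1.symm
      _ = b * bs * bs := by rw [← hbc]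
      _ = b * (bs * bs) := by rw [mul_assoc]
  -- extended (right-associated) rewriting lemmas
  have casx : ∀ x : R, a * (b * (as * x)) = as * (a * (b * x)) := fun x => by
    simp only [← mul_assoc]; rw [cas2]
  have bbsx : ∀ x : R, b * (bs * x) = bs * (b * x) := fun x => by
    simp only [← mul_assoc]; rw [hbc]
  have babx : ∀ x : R, b * (a * (b * x)) = b * (b * (a * x)) := fun x => by
    simp only [← mul_assoc]; rw [h2']
  have bsbbx : ∀ x : R, bs * (b * (b * x)) = b * x := fun x => by
    simp only [← mul_assoc]; rw [bsbb]
  have abax : ∀ x : R, a * (b * (a * x)) = a * (a * (b * x)) := fun x => by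
    simp only [← mul_assoc]; rw [h1']
  have asaax : ∀ x : R, as * (a * (a * x)) = a * x := fun x => by
    simp only [← mul_assoc]; rw [asaa]
  have asbax : ∀ x : R, as * (b * (a * x)) = a * (b * (as * x)) := fun x => by
    simp only [← mul_assoc]; rw [asba]
  have asbx : ∀ x : R, as * (b * x) = a * (b * (as * (as * x))) := fun x => by
    simp only [← mul_assoc]; rw [asbL]
  have bsabS : bs * (a * b) = b * (a * bs) := by
    simp only [← mul_assoc]; rw [bsab]
  have babS : b * (a * b) = b * (b * a) := by
    simp only [← mul_assoc]; exact h2'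
  have abaS : a * (b * a) = a * (a * b) := by
    simp only [← mul_assoc]; exact h1'
  -- commutation: (a*b)*(as*bs) = (as*bs)*(a*b)
  have comm2 : as * bs * a * b = a * b * as * bs := by
    simp only [mul_assoc]; rw [bsabS, asbax]
  have hcomm : a * b * (as * bs) = as * bs * (a * b) := by
    simp only [← mul_assoc]; exact comm2.symm
  have commx : ∀ x : R, as * (bs * (a * (b * x))) = a * (b * (as * (bs * x))) := fun x => by
    simp only [← mul_assoc]; rw [comm2]
  -- c p c = c
  have hcpc : a * b * (as * bs) * (a * b) = a * b := by
    simp only [mul_assoc]; rw [casx, bbsx, babS, bsbbx, abaS, asaax]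
  have hcpcx : ∀ x : R, a * (b * (as * (bs * (a * (b * x))))) = a * (b * x) := fun x => by
    rw [casx, bbsx, babx, bsbbx, abax, asaax]
  -- p = c * q
  have hp : as * bs = a * (b * (as * (as * (bs * bs)))) := by
    conv_lhs => rw [hbs3r]
    rw [asbx]
  have key : as * bs = a * (b * (as * (bs * (as * bs)))) := by
    calc as * bs = a * (b * (as * (as * (bs * bs)))) := hp
      _ = a * (b * (as * (bs * (a * (b * (as * (as * (bs * bs)))))))) :=
          (hcpcx (as * (as * (bs * bs)))).symm
      _ = a * (b * (as * (bs * (as * bs)))) := by rw [← hp]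
  have hpcp : as * bs * (a * b) * (as * bs) = as * bs := by
    simp only [mul_assoc]; rw [commx, ← key]
  exact ⟨hpcp, hcomm, hcpc⟩
end

section
/- Let R be a ring with identity and a, b ∈ R with group inverses such that ab = ba. Then a + b has a group inverse if and only if aa^#b + bb^#a has a group inverse. -/
lemma groupInv_comm {R : Type*} [Ring R] {a as x : R}
    (ha : IsGroupInv a as) (hx : x * a = a * x) : x * as = as * x := by
  obtain ⟨h1, h2, h3⟩ := ha
  have hee : (a*as)*(a*as) = a*as := by rw [← mul_assoc, h3]
  have hase : as*(a*as) = as := by rw [← mul_assoc, h1]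
  have hae : a*(a*as) = a := by rw [h2, ← mul_assoc, h3]
  have hca : ((a*as)*x)*a = (x*(a*as))*a := by
    rw [mul_assoc (a*as) x a, hx, ← mul_assoc, h3, mul_assoc x, h3, hx]
  have hce : ((a*as)*x)*(a*as) = x*(a*as) := by
    have t : (((a*as)*x)*a)*as = ((x*(a*as))*a)*as := by rw [hca]
    rw [mul_assoc ((a*as)*x) a as] at t
    rw [t, mul_assoc (x*(a*as)), mul_assoc x, hee]
  have hac : a*((a*as)*x) = a*(x*(a*as)) := by
    rw [← mul_assoc, hae, ← mul_assoc, ← hx, mul_assoc, hae]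
  have h6 : (a*as)*((a*as)*x) = (a*as)*(x*(a*as)) := by
    have t : as*(a*((a*as)*x)) = as*(a*(x*(a*as))) := by rw [hac]
    simp only [← mul_assoc] at t ⊢
    rw [h2]
    exact t
  have hex : (a*as)*x = x*(a*as) := by
    have h5 : (a*as)*((a*as)*x) = (a*as)*x := by rw [← mul_assoc, hee]
    have h5b : (a*as)*(x*(a*as)) = x*(a*as) := by rw [← mul_assoc, hce]
    rw [← h5, h6, h5b]
  have had : a*(x*as) = a*(as*x) := by
    rw [← mul_assoc, ← hx, mul_assoc, ← hex, ← mul_assoc]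
  have L : as*(a*(x*as)) = x*as := by
    simp only [← mul_assoc]
    rw [← h2, hex, mul_assoc x, h2, h1]
  have Rr : as*(a*(as*x)) = as*x := by
    simp only [← mul_assoc]
    rw [h1]
  calc x*as = as*(a*(x*as)) := L.symm
    _ = as*(a*(as*x)) := by rw [had]
    _ = as*x := Rr

lemma comm_hull {R : Type*} [Ring R] (s : Set R)
    (hs : ∀ x ∈ s, ∀ y ∈ s, x * y = y * x) :
    ∃ S : Subring R, s ⊆ S ∧ ∀ x ∈ S, ∀ y ∈ S, x * y = y * x := by
  refine ⟨Subring.centralizer ((Subring.centralizer s : Subring R) : Set R), ?_, ?_⟩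
  · intro x hx
    simp only [SetLike.mem_coe, Subring.mem_centralizer_iff]
    intro g hg
    exact (Subring.mem_centralizer_iff.mp hg x hx).symm
  · intro x hx y hy
    have hsub : s ⊆ ((Subring.centralizer s : Subring R) : Set R) := by
      intro z hz
      simp only [SetLike.mem_coe, Subring.mem_centralizer_iff]
      intro g hg
      exact hs g hg z hz
    have hy' : y ∈ Subring.centralizer s :=
      Subring.centralizer_le _ _ hsub hy
    exact (Subring.mem_centralizer_iff.mp hx y hy').symm

lemma IsGroupInv.map {S R : Type*} [Ring S] [Ring R] (f : S →+* R) {x y : S}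
    (h : IsGroupInv x y) : IsGroupInv (f x) (f y) :=
  ⟨by rw [← map_mul, ← map_mul, h.1], by rw [← map_mul, ← map_mul, h.2.1],
   by rw [← map_mul, ← map_mul, h.2.2]⟩

lemma fwd_aux {R : Type*} [CommRing R] (a b e f w : R)
    (he : e*e = e) (hf : f*f = f) (hea : e*a = a) (hfb : f*b = b)
    (hw : IsGroupInv (a+b) w) :
    IsGroupInv (e*b + f*a) (e*(f*w)) := by
  have hc : e*b + f*a = e*(f*(a+b)) := by linear_combination (-e)*hfb + (-f)*hea
  refine ⟨?_, mul_comm _ _, ?_⟩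
  · rw [hc]
    linear_combination e^3*f^3*hw.1 + w*f^3*(e+1)*he + w*e*(f+1)*hf
  · rw [hc]
    linear_combination e^3*f^3*hw.2.2 + (a+b)*f^3*(e+1)*he + (a+b)*e*(f+1)*hf

lemma bwd_aux {R : Type*} [CommRing R] (a b as bs e f v : R)
    (he : e*e = e) (hf : f*f = f)
    (hea : e*a = a) (heas : e*as = as) (hfb : f*b = b)
    (ha1 : as*a*as = as) (ha3 : a*as*a = a)
    (hb1 : bs*b*bs = bs) (hb3 : b*bs*b = b)
    (hv1 : v*(e*b + f*a)*v = v) (hv3 : (e*b + f*a)*v*(e*b + f*a) = e*b + f*a) :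
    IsGroupInv (a+b) (v + (1-f)*as + (1-e)*bs) := by
  have hc : e*b + f*a = e*f*(a+b) := by linear_combination (-e)*hfb + (-f)*hea
  have hv2 : e*f*v = v := by
    linear_combination (1 - e*f)*hv1 + v*v*(e*f-1)*hc + v*v*(a+b)*f*f*he + v*v*(a+b)*e*hf
  have hvp : v*((1-f)*a) = 0 := by
    linear_combination (-((1-f)*a))*hv2 - a*e*v*hf
  have hvp' : v*((1-f)*as) = 0 := by
    linear_combination (-((1-f)*as))*hv2 - as*e*v*hf
  have hvq : v*((1-e)*b) = 0 := by
    linear_combination (-((1-e)*b))*hv2 - b*f*v*he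
  have hvq' : v*((1-e)*bs) = 0 := by
    linear_combination (-((1-e)*bs))*hv2 - bs*f*v*he
  have hcp : (e*b + f*a)*((1-f)*a) = 0 := by
    linear_combination ((1-f)*a)*hc - a*e*(a+b)*hf
  have hcp' : (e*b + f*a)*((1-f)*as) = 0 := by
    linear_combination ((1-f)*as)*hc - as*e*(a+b)*hf
  have hcq : (e*b + f*a)*((1-e)*b) = 0 := by
    linear_combination ((1-e)*b)*hc - b*f*(a+b)*he
  have hcq' : (e*b + f*a)*((1-e)*bs) = 0 := by
    linear_combination ((1-e)*bs)*hc - bs*f*(a+b)*he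
  have hpq : ((1-f)*a)*((1-e)*b) = 0 := by
    linear_combination (-((1-f)*b))*hea
  have hpq' : ((1-f)*a)*((1-e)*bs) = 0 := by
    linear_combination (-((1-f)*bs))*hea
  have hp'q : ((1-f)*as)*((1-e)*b) = 0 := by
    linear_combination (-((1-f)*b))*heas
  have hpp'p : ((1-f)*a)*((1-f)*as)*((1-f)*a) = (1-f)*a := by
    linear_combination (1-f)^3*ha3 + a*(2-f)*hf
  have hp'pp' : ((1-f)*as)*((1-f)*a)*((1-f)*as) = (1-f)*as := by
    linear_combination (1-f)^3*ha1 + as*(2-f)*hf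
  have hqq'q : ((1-e)*b)*((1-e)*bs)*((1-e)*b) = (1-e)*b := by
    linear_combination (1-e)^3*hb3 + b*(2-e)*he
  have hq'qq' : ((1-e)*bs)*((1-e)*b)*((1-e)*bs) = (1-e)*bs := by
    linear_combination (1-e)^3*hb1 + bs*(2-e)*he
  have h_sw : (a+b)*(v + (1-f)*as + (1-e)*bs)
      = (e*b + f*a)*v + ((1-f)*a)*((1-f)*as) + ((1-e)*b)*((1-e)*bs) := by
    linear_combination hcp' + hcq' + hvp + hpq' + hvq + hp'q
  refine ⟨?_, mul_comm _ _, ?_⟩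
  · calc (v + (1-f)*as + (1-e)*bs)*(a+b)*(v + (1-f)*as + (1-e)*bs)
        = (v + (1-f)*as + (1-e)*bs)*((a+b)*(v + (1-f)*as + (1-e)*bs)) := by ring
      _ = (v + (1-f)*as + (1-e)*bs)*((e*b + f*a)*v + ((1-f)*a)*((1-f)*as)
            + ((1-e)*b)*((1-e)*bs)) := by rw [h_sw]
      _ = v + (1-f)*as + (1-e)*bs := by
          linear_combination hv1 + hp'pp' + hq'qq' + ((1-f)*as)*hvp + ((1-e)*bs)*hvq
            + v*hcp' + ((1-e)*bs)*hp'q + v*hcq' + ((1-f)*as)*hpq'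
  · calc (a+b)*(v + (1-f)*as + (1-e)*bs)*(a+b)
        = ((e*b + f*a)*v + ((1-f)*a)*((1-f)*as) + ((1-e)*b)*((1-e)*bs))*(a+b) := by
          rw [h_sw]
      _ = a+b := by
          linear_combination hv3 + hpp'p + hqq'q + (e*b+f*a)*hvp + (e*b+f*a)*hvq
            + ((1-f)*a)*hcp' + ((1-f)*a)*hp'q + ((1-e)*b)*hcq' + ((1-e)*b)*hpq'

theorem stmt_10 {R : Type*} [Ring R] (a b as bs : R)
    (ha : IsGroupInv a as)
    (hb : IsGroupInv b bs)
    (h : a * b = b * a) :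
    (∃ w, IsGroupInv (a + b) w) ↔
      (∃ w, IsGroupInv (a * as * b + b * bs * a) w) := by
  have caas : Commute a as := ha.2.1
  have cbbs : Commute b bs := hb.2.1
  have cab : Commute a b := h
  have cbas : Commute b as := groupInv_comm ha h.symm
  have cabs : Commute a bs := groupInv_comm hb h
  have casbs : Commute as bs := groupInv_comm hb cbas.symm
  constructor
  · rintro ⟨w, hw⟩
    have caw : Commute a w := groupInv_comm hw ((Commute.refl a).add_right cab)
    have cbw : Commute b w := groupInv_comm hw (cab.symm.add_right (Commute.refl b))
    have casw : Commute as w := groupInv_comm hw (caas.symm.add_right cbas.symm)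
    have cbsw : Commute bs w := groupInv_comm hw (cabs.symm.add_right cbbs.symm)
    have hpair : ∀ x ∈ ({a, b, as, bs, w} : Set R), ∀ y ∈ ({a, b, as, bs, w} : Set R),
        x * y = y * x := by
      intro x hx y hy
      simp only [Set.mem_insert_iff, Set.mem_singleton_iff] at hx hy
      rcases hx with rfl|rfl|rfl|rfl|rfl <;> rcases hy with rfl|rfl|rfl|rfl|rfl <;>
        first
          | rfl
          | exact cab | exact cab.symm | exact caas | exact caas.symm
          | exact cbbs | exact cbbs.symm | exact cbas | exact cbas.symm
          | exact cabs | exact cabs.symm | exact casbs | exact casbs.symm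
          | exact caw | exact caw.symm | exact cbw | exact cbw.symm
          | exact casw | exact casw.symm | exact cbsw | exact cbsw.symm
    obtain ⟨S, hsub, hScomm⟩ := comm_hull _ hpair
    letI : CommRing S :=
      { (inferInstance : Ring S) with
        mul_comm := fun x y => Subtype.ext (hScomm x x.2 y y.2) }
    set A : S := ⟨a, hsub (by simp)⟩
    set B : S := ⟨b, hsub (by simp)⟩
    set As : S := ⟨as, hsub (by simp)⟩
    set Bs : S := ⟨bs, hsub (by simp)⟩
    set W : S := ⟨w, hsub (by simp)⟩
    have HA : IsGroupInv A As := ⟨Subtype.ext ha.1, Subtype.ext ha.2.1, Subtype.ext ha.2.2⟩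
    have HB : IsGroupInv B Bs := ⟨Subtype.ext hb.1, Subtype.ext hb.2.1, Subtype.ext hb.2.2⟩
    have HW : IsGroupInv (A + B) W :=
      ⟨Subtype.ext hw.1, Subtype.ext hw.2.1, Subtype.ext hw.2.2⟩
    have he : (A*As)*(A*As) = A*As := by linear_combination As*HA.2.2
    have hf : (B*Bs)*(B*Bs) = B*Bs := by linear_combination Bs*HB.2.2
    have hea : (A*As)*A = A := HA.2.2
    have hfb : (B*Bs)*B = B := HB.2.2
    have key := fwd_aux A B (A*As) (B*Bs) W he hf hea hfb HW
    have down := IsGroupInv.map S.subtype key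
    exact ⟨_, down⟩
  · rintro ⟨v, hv⟩
    have hcA : Commute a (a*as*b + b*bs*a) :=
      (((Commute.refl a).mul_right caas).mul_right cab).add_right
        ((cab.mul_right cabs).mul_right (Commute.refl a))
    have hcB : Commute b (a*as*b + b*bs*a) :=
      ((cab.symm.mul_right cbas).mul_right (Commute.refl b)).add_right
        (((Commute.refl b).mul_right cbbs).mul_right cab.symm)
    have hcAs : Commute as (a*as*b + b*bs*a) :=
      ((caas.symm.mul_right (Commute.refl as)).mul_right cbas.symm).add_right
        ((cbas.symm.mul_right casbs).mul_right caas.symm)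
    have hcBs : Commute bs (a*as*b + b*bs*a) :=
      ((cabs.symm.mul_right casbs.symm).mul_right cbbs.symm).add_right
        ((cbbs.symm.mul_right (Commute.refl bs)).mul_right cabs.symm)
    have cav : Commute a v := groupInv_comm hv hcA
    have cbv : Commute b v := groupInv_comm hv hcB
    have casv : Commute as v := groupInv_comm hv hcAs
    have cbsv : Commute bs v := groupInv_comm hv hcBs
    have hpair : ∀ x ∈ ({a, b, as, bs, v} : Set R), ∀ y ∈ ({a, b, as, bs, v} : Set R),
        x * y = y * x := by
      intro x hx y hy
      simp only [Set.mem_insert_iff, Set.mem_singleton_iff] at hx hy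
      rcases hx with rfl|rfl|rfl|rfl|rfl <;> rcases hy with rfl|rfl|rfl|rfl|rfl <;>
        first
          | rfl
          | exact cab | exact cab.symm | exact caas | exact caas.symm
          | exact cbbs | exact cbbs.symm | exact cbas | exact cbas.symm
          | exact cabs | exact cabs.symm | exact casbs | exact casbs.symm
          | exact cav | exact cav.symm | exact cbv | exact cbv.symm
          | exact casv | exact casv.symm | exact cbsv | exact cbsv.symm
    obtain ⟨S, hsub, hScomm⟩ := comm_hull _ hpair
    letI : CommRing S :=
      { (inferInstance : Ring S) with
        mul_comm := fun x y => Subtype.ext (hScomm x x.2 y y.2) }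
    set A : S := ⟨a, hsub (by simp)⟩
    set B : S := ⟨b, hsub (by simp)⟩
    set As : S := ⟨as, hsub (by simp)⟩
    set Bs : S := ⟨bs, hsub (by simp)⟩
    set V : S := ⟨v, hsub (by simp)⟩
    have HA : IsGroupInv A As := ⟨Subtype.ext ha.1, Subtype.ext ha.2.1, Subtype.ext ha.2.2⟩
    have HB : IsGroupInv B Bs := ⟨Subtype.ext hb.1, Subtype.ext hb.2.1, Subtype.ext hb.2.2⟩
    have HV : IsGroupInv ((A*As)*B + (B*Bs)*A) V :=
      ⟨Subtype.ext hv.1, Subtype.ext hv.2.1, Subtype.ext hv.2.2⟩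
    have he : (A*As)*(A*As) = A*As := by linear_combination As*HA.2.2
    have hf : (B*Bs)*(B*Bs) = B*Bs := by linear_combination Bs*HB.2.2
    have hea : (A*As)*A = A := HA.2.2
    have heas : (A*As)*As = As := by linear_combination HA.1
    have hfb : (B*Bs)*B = B := HB.2.2
    have key := bwd_aux A B As Bs (A*As) (B*Bs) V he hf hea heas hfb
      HA.1 HA.2.2 HB.1 HB.2.2 HV.1 HV.2.2
    have down := IsGroupInv.map S.subtype key
    exact ⟨_, down⟩
end

section
/- Let X, Y be Banach spaces and M = [[A,B],[C,D]] a bounded operator on X ⊕ Y, where A and D have group inverses. If A^π B = 0, D^π C = 0, BCA^π = 0, ABC = 0, and BD = BCA^#B, then M has a group inverse. -/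
open ContinuousLinearMap

section aux
variable {X Y : Type*}
    [NormedAddCommGroup X] [NormedSpace ℂ X]
    [NormedAddCommGroup Y] [NormedSpace ℂ Y]

/-- block operator -/
noncomputable def blkOp (P : X →L[ℂ] X) (Q : Y →L[ℂ] X) (R : X →L[ℂ] Y) (S : Y →L[ℂ] Y) :
    (X × Y) →L[ℂ] (X × Y) :=
  ((P ∘L ContinuousLinearMap.fst ℂ X Y) + (Q ∘L ContinuousLinearMap.snd ℂ X Y)).prod
    ((R ∘L ContinuousLinearMap.fst ℂ X Y) + (S ∘L ContinuousLinearMap.snd ℂ X Y))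

lemma blkOp_mul (P P' : X →L[ℂ] X) (Q Q' : Y →L[ℂ] X) (R R' : X →L[ℂ] Y) (S S' : Y →L[ℂ] Y) :
    blkOp P Q R S * blkOp P' Q' R' S' =
      blkOp (P ∘L P' + Q ∘L R') (P ∘L Q' + Q ∘L S') (R ∘L P' + S ∘L R') (R ∘L Q' + S ∘L S') := by
  refine ContinuousLinearMap.ext fun v => Prod.ext ?_ ?_ <;>
    (simp [blkOp, ContinuousLinearMap.mul_apply]; abel)

lemma blkOp_congr {P P' : X →L[ℂ] X} {Q Q' : Y →L[ℂ] X} {R R' : X →L[ℂ] Y} {S S' : Y →L[ℂ] Y}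
    (h1 : P = P') (h2 : Q = Q') (h3 : R = R') (h4 : S = S') :
    blkOp P Q R S = blkOp P' Q' R' S' := by
  rw [h1, h2, h3, h4]

end aux

lemma groupInv_of {R : Type*} [Ring R] (a x : R) (hc : a * x = x * a) (ho : a * x * a = a) :
    IsGroupInv a (x * a * x) := by
  have he : a * x * (a * x) = a * x := by rw [← mul_assoc, ho]
  have l : a * (x * a * x) = a * x := by rw [← mul_assoc, ← mul_assoc, ho]
  have r : x * a * x * a = a * x := by
    rw [mul_assoc (x * a) x a, ← hc]; exact he
  refine ⟨?_, ?_, ?_⟩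
  · calc x * a * x * a * (x * a * x) = a * x * (x * a * x) := by rw [r]
    _ = x * a * (x * a * x) := by rw [hc]
    _ = x * (a * (x * a * x)) := by rw [mul_assoc]
    _ = x * (a * x) := by rw [l]
    _ = x * a * x := by rw [← mul_assoc]
  · rw [l, r]
  · rw [l, ho]

theorem stmt_17 {X Y : Type*}
    [NormedAddCommGroup X] [NormedSpace ℂ X] [CompleteSpace X]
    [NormedAddCommGroup Y] [NormedSpace ℂ Y] [CompleteSpace Y]
    (A As : X →L[ℂ] X) (B : Y →L[ℂ] X) (C : X →L[ℂ] Y) (D Ds : Y →L[ℂ] Y)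
    (hA : IsGroupInv A As) (hD : IsGroupInv D Ds)
    (h1 : (1 - A * As) ∘L B = 0)
    (h2 : (1 - D * Ds) ∘L C = 0)
    (h3 : ((B ∘L C) : X →L[ℂ] X) * (1 - A * As) = 0)
    (h4 : A ∘L (B ∘L C) = 0)
    (h5 : B ∘L D = (B ∘L C) ∘L (As ∘L B)) :
    ∃ W, IsGroupInv
        (((A ∘L ContinuousLinearMap.fst ℂ X Y) + (B ∘L ContinuousLinearMap.snd ℂ X Y)).prod
          ((C ∘L ContinuousLinearMap.fst ℂ X Y) + (D ∘L ContinuousLinearMap.snd ℂ X Y))) W := by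
  -- pointwise facts
  have peA2 : ∀ x, As (A (As x)) = As x := fun x => by
    simpa [ContinuousLinearMap.mul_apply] using ContinuousLinearMap.ext_iff.mp hA.1 x
  have pcommA : ∀ x, A (As x) = As (A x) := fun x => by
    simpa [ContinuousLinearMap.mul_apply] using ContinuousLinearMap.ext_iff.mp hA.2.1 x
  have peA1 : ∀ x, A (As (A x)) = A x := fun x => by
    simpa [ContinuousLinearMap.mul_apply] using ContinuousLinearMap.ext_iff.mp hA.2.2 x
  have peA3 : ∀ x, As (A (A x)) = A x := fun x => by rw [← pcommA, peA1]
  have peA4 : ∀ x, A (As (As x)) = As x := fun x => by rw [pcommA, peA2]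
  have peD2 : ∀ x, Ds (D (Ds x)) = Ds x := fun x => by
    simpa [ContinuousLinearMap.mul_apply] using ContinuousLinearMap.ext_iff.mp hD.1 x
  have pcommD : ∀ x, D (Ds x) = Ds (D x) := fun x => by
    simpa [ContinuousLinearMap.mul_apply] using ContinuousLinearMap.ext_iff.mp hD.2.1 x
  have peD1 : ∀ x, D (Ds (D x)) = D x := fun x => by
    simpa [ContinuousLinearMap.mul_apply] using ContinuousLinearMap.ext_iff.mp hD.2.2 x
  have peD3 : ∀ x, Ds (D (D x)) = D x := fun x => by rw [← pcommD, peD1]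
  have peD4 : ∀ x, D (Ds (Ds x)) = Ds x := fun x => by rw [pcommD, peD2]
  have pb1 : ∀ y, A (As (B y)) = B y := fun y => by
    have h := ContinuousLinearMap.ext_iff.mp h1 y
    simp only [ContinuousLinearMap.comp_apply, ContinuousLinearMap.sub_apply,
      ContinuousLinearMap.one_apply, ContinuousLinearMap.mul_apply,
      ContinuousLinearMap.zero_apply, sub_eq_zero] at h
    exact h.symm
  have pc1 : ∀ x, D (Ds (C x)) = C x := fun x => by
    have h := ContinuousLinearMap.ext_iff.mp h2 x
    simp only [ContinuousLinearMap.comp_apply, ContinuousLinearMap.sub_apply,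
      ContinuousLinearMap.one_apply, ContinuousLinearMap.mul_apply,
      ContinuousLinearMap.zero_apply, sub_eq_zero] at h
    exact h.symm
  have pb2 : ∀ y, As (A (B y)) = B y := fun y => by rw [← pcommA, pb1]
  have pc2 : ∀ x, Ds (D (C x)) = C x := fun x => by rw [← pcommD, pc1]
  have ph4 : ∀ x, A (B (C x)) = 0 := fun x => by
    simpa using ContinuousLinearMap.ext_iff.mp h4 x
  have pz1 : ∀ x, B (C x) = 0 := fun x => by
    rw [← pb1 (C x), pcommA, ph4]; exact map_zero As
  have pz2 : ∀ y, B (D y) = 0 := fun y => by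
    have := ContinuousLinearMap.ext_iff.mp h5 y
    simp only [ContinuousLinearMap.comp_apply] at this
    rw [this, pz1]
  have pz3 : ∀ y, B (Ds y) = 0 := fun y => by
    rw [← peD4 y, pz2]
  -- block computation
  set W3 : X →L[ℂ] Y := Ds ∘L (Ds ∘L C) - Ds ∘L (C ∘L As) - Ds ∘L (Ds ∘L (C ∘L (A ∘L As))) with hW3
  set W4 : Y →L[ℂ] Y :=
    Ds - Ds ∘L (C ∘L (As ∘L (As ∘L B))) - Ds ∘L (Ds ∘L (C ∘L (As ∘L B))) with hW4
  set Wb : (X × Y) →L[ℂ] (X × Y) := blkOp As (As ∘L (As ∘L B)) W3 W4 with hWb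
  show ∃ W, IsGroupInv (blkOp A B C D) W
  have hcomm : blkOp A B C D * Wb = Wb * blkOp A B C D := by
    rw [hWb, blkOp_mul, blkOp_mul]
    refine blkOp_congr ?_ ?_ ?_ ?_ <;>
      (refine ContinuousLinearMap.ext fun v => ?_;
        simp [hW3, hW4, pcommA, pcommD, peA1, peA2, peA3, peA4, peD1, peD2, peD3, peD4,
          pb1, pb2, pc1, pc2, pz1, pz2, pz3];
        try abel)
  have houter : blkOp A B C D * Wb * blkOp A B C D = blkOp A B C D := by
    rw [hWb, blkOp_mul, blkOp_mul]
    have : blkOp A B C D =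
        blkOp (A : X →L[ℂ] X) (B : Y →L[ℂ] X) (C : X →L[ℂ] Y) (D : Y →L[ℂ] Y) := rfl
    rw [this]
    refine blkOp_congr ?_ ?_ ?_ ?_ <;>
      (refine ContinuousLinearMap.ext fun v => ?_;
        simp [hW3, hW4, pcommA, pcommD, peA1, peA2, peA3, peA4, peD1, peD2, peD3, peD4,
          pb1, pb2, pc1, pc2, pz1, pz2, pz3];
        try abel)
  exact ⟨Wb * blkOp A B C D * Wb, groupInv_of _ _ hcomm houter⟩
end
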